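/- Let N be a pure-injective sheaf of O_X-modules on a ringed space X (pure-injective in the Jensen–Lenzing sense) and U ⊆ X an open set. Then the O_X(U)-module N(U) of sections over U is a pure-injective O_X(U)-module. -/

import Mathlib

open CategoryTheory Limits Opposite TopologicalSpace
open scoped Classical

universe w v u

noncomputable section

/-- The canonical morphism from the coproduct of `I` copies of `M` to the product of
`I` copies of `M`. -/
def sumToProd {C : Type u} [Category.{v} C] [Preadditive C]
    [HasCoproducts.{w} C] [HasProducts.{w} C] (M : C) (I : Type w) :
    (∐ fun _ : I => M) ⟶ (∏ᶜ fun _ : I => M) :=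
  Limits.Sigma.desc fun i => Pi.lift fun j => if i = j then 𝟙 M else 0

/-- Pure-injectivity in the sense of the Jensen–Lenzing criterion. -/
def IsPureInjective {C : Type u} [Category.{v} C] [Preadditive C]
    [HasCoproducts.{w} C] [HasProducts.{w} C] (M : C) : Prop :=
  ∀ I : Type w, ∃ g : (∏ᶜ fun _ : I => M) ⟶ M,
    sumToProd M I ≫ g = Limits.Sigma.desc fun _ : I => 𝟙 M

/-- Pure-injectivity of a module via the Jensen–Lenzing criterion: for every set `I`
the summation map `M^(I) → M` extends along the inclusion `M^(I) → M^I`. -/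
def ModulePureInjective (S : Type u) [Ring S] (M : Type u) [AddCommGroup M]
    [Module S M] : Prop :=
  ∀ I : Type u, ∃ φ : (I → M) →ₗ[S] M, ∀ f : I →₀ M, φ f = f.sum fun _ m => m

/-- Let `N` be a pure-injective sheaf of `O_X`-modules on a ringed
space `X` (pure-injective in the Jensen–Lenzing sense) and `U ⊆ X` an open set. Then the
`O_X(U)`-module `N(U)` of sections over `U` is a pure-injective `O_X(U)`-module. -/
theorem sections_of_pureInjective_sheafOfModules
    (X : TopCat.{u}) (R : Sheaf (Opens.grothendieckTopology X) RingCat.{u})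
    (N : SheafOfModules.{u} R) (hN : IsPureInjective.{u} N) (U : Opens X) :
    ModulePureInjective (R.val.obj (op U)) (N.val.obj (op U)) := by
  intro I
  obtain ⟨g, hg⟩ := hN I
  let ev := SheafOfModules.evaluation.{u} R (op U)
  let c : ev.obj (∏ᶜ fun _ : I => N) ⟶ ∏ᶜ fun _ : I => ev.obj N :=
    piComparison ev (fun _ : I => N)
  haveI : IsIso c := inferInstance
  let e : ModuleCat.of (R.val.obj (op U)) (I → N.val.obj (op U)) ⟶ ev.obj (∏ᶜ fun _ : I => N) :=
    (ModuleCat.piIsoPi (fun _ : I => ev.obj N)).inv ≫ inv c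
  refine ⟨(e ≫ ev.map g : _ ⟶ ev.obj N).hom, ?_⟩
  have hsingle : ∀ (i : I) (m : N.val.obj (op U)),
      (e ≫ ev.map g) (Pi.single i m) = m := by
    intro i m
    let p : N ⟶ (∏ᶜ fun _ : I => N) := Pi.lift fun j => if i = j then 𝟙 N else 0
    have key : e (Pi.single i m) = ev.map p m := by
      let w := c ≫ (ModuleCat.piIsoPi (fun _ : I => ev.obj N)).hom
      haveI : IsIso w := inferInstance
      have hinv : Function.LeftInverse (inv w) w := fun x => by
        show (inv w) (w x) = x
        rw [← Function.comp_apply (f := (inv w : _ → _)) (g := (w : _ → _)) (x := x),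
          ← ConcreteCategory.coe_comp, IsIso.hom_inv_id, ModuleCat.id_apply]
      apply hinv.injective
      show (e ≫ w) (Pi.single i m) = w (ev.map p m)
      have h1 : e ≫ w = 𝟙 _ := by
        show ((ModuleCat.piIsoPi (fun _ : I => ev.obj N)).inv ≫ inv c) ≫
          (c ≫ (ModuleCat.piIsoPi (fun _ : I => ev.obj N)).hom) = 𝟙 _
        simp
      have hfun : w (ev.map p m) = Pi.single i m := by
        funext j
        have h2 : w ≫ ModuleCat.ofHom (LinearMap.proj j :
            (∀ _ : I, ev.obj N) →ₗ[R.val.obj (op U)] ev.obj N)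
          = ev.map (Pi.π (fun _ : I => N) j) := by
          show (c ≫ _) ≫ _ = _
          rw [Category.assoc, ModuleCat.piIsoPi_hom_ker_subtype, piComparison_comp_π]
        have h3 := congrArg (fun φ => φ (ev.map p m)) h2
        dsimp only [ModuleCat.hom_comp, LinearMap.comp_apply, LinearMap.proj_apply] at h3
        have h3' : w (ev.map p m) j
            = ev.map (Pi.π (fun _ : I => N) j) (ev.map p m) := h3
        rw [h3', ← Function.comp_apply (f := (ev.map (Pi.π (fun _ : I => N) j) : _ → _))
            (g := (ev.map p : _ → _)) (x := m),
          ← ConcreteCategory.coe_comp, ← Functor.map_comp]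
        have h4 : p ≫ Pi.π (fun _ : I => N) j = if i = j then 𝟙 N else 0 :=
          limit.lift_π _ _
        rw [h4]
        by_cases hij : i = j
        · subst hij
          rw [if_pos rfl, CategoryTheory.Functor.map_id]
          exact (Pi.single_eq_same (M := (fun _ : I => (N.val.obj (op U) : Type u))) i m).symm
        · rw [if_neg hij]
          exact (Pi.single_eq_of_ne (M := (fun _ : I => (N.val.obj (op U) : Type u))) (fun h => hij h.symm) m).symm
      rw [h1, hfun]
      rfl
    have hpg : p ≫ g = 𝟙 N := by
      have h5 : Sigma.ι (fun _ : I => N) i ≫ sumToProd N I = p := by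
        rw [sumToProd, colimit.ι_desc]
        rfl
      rw [← h5, Category.assoc, hg, colimit.ι_desc]
      rfl
    show (ev.map g) (e (Pi.single i m)) = m
    rw [key, ← Function.comp_apply (f := (ev.map g : _ → _)) (g := (ev.map p : _ → _)) (x := m),
      ← ConcreteCategory.coe_comp, ← Functor.map_comp, hpg, CategoryTheory.Functor.map_id]
    rfl
  intro f
  have hf : (f : I → N.val.obj (op U)) = ∑ i ∈ f.support, Pi.single i (f i) := by
    funext j
    rw [Finset.sum_apply]
    by_cases hj : j ∈ f.support
    · have hs := Finset.sum_eq_single (s := f.support)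
        (f := fun i => Pi.single i (f i) j) j
        (fun i _ hij => by exact Pi.single_eq_of_ne (M := (fun _ : I => (N.val.obj (op U) : Type u))) (Ne.symm hij) (f i))
        (fun h => absurd hj h)
      rw [hs]
      exact (Pi.single_eq_same (M := (fun _ : I => (N.val.obj (op U) : Type u))) j (f j)).symm
    · rw [Finsupp.notMem_support_iff.mp hj]
      refine (Finset.sum_eq_zero fun i hi => ?_).symm
      have hne : j ≠ i := fun h => hj (by rw [h]; exact hi)
      exact Pi.single_eq_of_ne (M := (fun _ : I => (N.val.obj (op U) : Type u))) hne (f i)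
  show (e ≫ ev.map g) (f : I → N.val.obj (op U)) = _
  rw [hf, map_sum, Finsupp.sum]
  exact Finset.sum_congr rfl fun i _ => hsingle i (f i)

end
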